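/- arXiv:2605.11042 — 4 statements merged into one kernel-verified Lean document; each statement's English description precedes it below -/
import Mathlib

section
/- Under assumptions (i)–(iii), the optimal Q-function is Lipschitz in the mean-field parameter: for all s, s' ∈ S, ‖Q_s − Q_{s'}‖∞ ≤ L · ‖s − s'‖, where L = ((1 − α) L_r + α R_max |X| L_p) / (1 − α)². -/
open Finset

/-- The Bellman optimality operator
`(T Q)(x,a) = r(x,a) + α * Σ_{x'} p(x'|x,a) * max_{a'} Q(x',a')`. -/
noncomputable def bellmanOp {X A : Type*} [Fintype X] [Fintype A] [Nonempty A]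
    (r : X × A → ℝ) (p : X × A → X → ℝ) (α : ℝ) (Q : X × A → ℝ) : X × A → ℝ :=
  fun xa => r xa + α * ∑ x' : X, p xa x' *
    Finset.univ.sup' Finset.univ_nonempty (fun a' : A => Q (x', a'))

/-- The sup norm `‖Q‖∞ = max_{(x,a)} |Q(x,a)|`. -/
noncomputable def supNorm {X A : Type*} [Fintype X] [Fintype A] [Nonempty X] [Nonempty A]
    (Q : X × A → ℝ) : ℝ :=
  Finset.univ.sup' Finset.univ_nonempty (fun xa : X × A => |Q xa|)

lemma abs_le_supNorm {X A : Type*} [Fintype X] [Fintype A] [Nonempty X] [Nonempty A]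
    (Q : X × A → ℝ) (xa : X × A) : |Q xa| ≤ supNorm Q :=
  Finset.le_sup' (fun xa : X × A => |Q xa|) (Finset.mem_univ xa)

lemma supNorm_le {X A : Type*} [Fintype X] [Fintype A] [Nonempty X] [Nonempty A]
    {Q : X × A → ℝ} {c : ℝ} (h : ∀ xa, |Q xa| ≤ c) : supNorm Q ≤ c :=
  Finset.sup'_le _ _ fun xa _ => h xa

lemma supNorm_nonneg {X A : Type*} [Fintype X] [Fintype A] [Nonempty X] [Nonempty A]
    (Q : X × A → ℝ) : 0 ≤ supNorm Q :=
  le_trans (abs_nonneg _) (abs_le_supNorm Q (Classical.arbitrary _))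

lemma abs_sup'_sub_sup'_le {A : Type*} [Fintype A] [Nonempty A]
    {f g : A → ℝ} {c : ℝ} (h : ∀ a, |f a - g a| ≤ c) :
    |Finset.univ.sup' Finset.univ_nonempty f - Finset.univ.sup' Finset.univ_nonempty g| ≤ c := by
  rw [abs_sub_le_iff]
  constructor
  · rw [sub_le_iff_le_add]
    refine Finset.sup'_le _ _ fun a _ => ?_
    have h1 := abs_le.mp (h a)
    have h2 := Finset.le_sup' g (Finset.mem_univ a)
    linarith [h1.2]
  · rw [sub_le_iff_le_add]
    refine Finset.sup'_le _ _ fun a _ => ?_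
    have h1 := abs_le.mp (h a)
    have h2 := Finset.le_sup' f (Finset.mem_univ a)
    linarith [h1.1]

lemma abs_sup'_le {A : Type*} [Fintype A] [Nonempty A]
    {f : A → ℝ} {c : ℝ} (h : ∀ a, |f a| ≤ c) :
    |Finset.univ.sup' Finset.univ_nonempty f| ≤ c := by
  have := abs_sup'_sub_sup'_le (g := fun _ : A => (0 : ℝ)) (by simpa using h)
  simpa [Finset.sup'_const] using this

/-- Under assumptions (i)–(iii), the optimal Q-function is Lipschitz in
the mean-field parameter: for all `s, s' ∈ S`, `‖Q_s − Q_{s'}‖∞ ≤ L * ‖s − s'‖`, where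
`L = ((1 − α) L_r + α R_max |X| L_p) / (1 − α)²`. -/
theorem q_function_lipschitz_in_mean_field
    {X A : Type*} [Fintype X] [Fintype A] [Nonempty X] [Nonempty A]
    {E : Type*} [NormedAddCommGroup E] [NormedSpace ℝ E]
    (S : Set E) (hS : S.Nonempty)
    (α : ℝ) (hα0 : 0 ≤ α) (hα1 : α < 1)
    (r : E → X × A → ℝ) (p : E → X × A → X → ℝ)
    (hp0 : ∀ s ∈ S, ∀ xa x', 0 ≤ p s xa x')
    (hp1 : ∀ s ∈ S, ∀ xa, ∑ x' : X, p s xa x' = 1)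
    (Rmax : ℝ) (hRmax : 0 ≤ Rmax)
    (hR : ∀ s ∈ S, ∀ xa : X × A, |r s xa| ≤ Rmax)
    (Lr : ℝ) (hLr0 : 0 ≤ Lr)
    (hLr : ∀ s ∈ S, ∀ s' ∈ S, ∀ xa : X × A, |r s xa - r s' xa| ≤ Lr * ‖s - s'‖)
    (Lp : ℝ) (hLp0 : 0 ≤ Lp)
    (hLp : ∀ s ∈ S, ∀ s' ∈ S, ∀ xa x', |p s xa x' - p s' xa x'| ≤ Lp * ‖s - s'‖)
    (Q : E → X × A → ℝ)
    (hQfix : ∀ s ∈ S, bellmanOp (r s) (p s) α (Q s) = Q s) :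
    ∀ s ∈ S, ∀ s' ∈ S,
      supNorm (fun xa => Q s xa - Q s' xa) ≤
        ((1 - α) * Lr + α * Rmax * (Fintype.card X) * Lp) / (1 - α) ^ 2 * ‖s - s'‖ := by
  intro s hs s' hs'
  have hε0 : (0:ℝ) ≤ ‖s - s'‖ := norm_nonneg _
  set ε := ‖s - s'‖ with hεdef
  have h1α : 0 < 1 - α := by linarith
  set M : ℝ := Rmax / (1 - α) with hMdef
  have hM0 : 0 ≤ M := div_nonneg hRmax h1α.le
  -- bound on supNorm (Q t)
  have hM : ∀ t ∈ S, supNorm (Q t) ≤ M := by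
    intro t ht
    have hb : supNorm (Q t) ≤ Rmax + α * supNorm (Q t) := by
      refine supNorm_le fun xa => ?_
      conv_lhs => rw [← hQfix t ht]
      show |r t xa + α * ∑ x' : X, p t xa x' *
          Finset.univ.sup' Finset.univ_nonempty (fun a' : A => Q t (x', a'))| ≤ _
      have hV : ∀ x' : X,
          |Finset.univ.sup' Finset.univ_nonempty (fun a' : A => Q t (x', a'))| ≤ supNorm (Q t) :=
        fun x' => abs_sup'_le (fun a' => abs_le_supNorm (Q t) (x', a'))
      have hsum : |∑ x' : X, p t xa x' *
          Finset.univ.sup' Finset.univ_nonempty (fun a' : A => Q t (x', a'))| ≤ supNorm (Q t) := by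
        calc |∑ x' : X, p t xa x' *
              Finset.univ.sup' Finset.univ_nonempty (fun a' : A => Q t (x', a'))|
            ≤ ∑ x' : X, |p t xa x' *
              Finset.univ.sup' Finset.univ_nonempty (fun a' : A => Q t (x', a'))| :=
              Finset.abs_sum_le_sum_abs _ _
          _ ≤ ∑ x' : X, p t xa x' * supNorm (Q t) := by
              refine Finset.sum_le_sum fun x' _ => ?_
              rw [abs_mul, abs_of_nonneg (hp0 t ht xa x')]
              exact mul_le_mul_of_nonneg_left (hV x') (hp0 t ht xa x')
          _ = supNorm (Q t) := by rw [← Finset.sum_mul, hp1 t ht, one_mul]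
      calc |r t xa + α * ∑ x' : X, p t xa x' *
            Finset.univ.sup' Finset.univ_nonempty (fun a' : A => Q t (x', a'))|
          ≤ |r t xa| + |α * ∑ x' : X, p t xa x' *
            Finset.univ.sup' Finset.univ_nonempty (fun a' : A => Q t (x', a'))| := abs_add_le _ _
        _ ≤ Rmax + α * supNorm (Q t) := by
            rw [abs_mul, abs_of_nonneg hα0]
            exact add_le_add (hR t ht xa) (mul_le_mul_of_nonneg_left hsum hα0)
    rw [hMdef, le_div_iff₀ h1α]
    nlinarith [hb]
  set D : ℝ := supNorm (fun xa => Q s xa - Q s' xa) with hDdef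
  set c : ℝ := (Fintype.card X : ℝ) with hcdef
  have hc0 : 0 ≤ c := Nat.cast_nonneg _
  have key : D ≤ Lr * ε + α * D + α * (c * (Lp * ε * M)) := by
    refine supNorm_le fun xa => ?_
    show |Q s xa - Q s' xa| ≤ _
    conv_lhs => rw [← hQfix s hs, ← hQfix s' hs']
    show |(r s xa + α * ∑ x' : X, p s xa x' *
        Finset.univ.sup' Finset.univ_nonempty (fun a' : A => Q s (x', a'))) -
        (r s' xa + α * ∑ x' : X, p s' xa x' *
        Finset.univ.sup' Finset.univ_nonempty (fun a' : A => Q s' (x', a')))| ≤ _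
    set Vs : X → ℝ := fun x' => Finset.univ.sup' Finset.univ_nonempty (fun a' : A => Q s (x', a'))
    set Vs' : X → ℝ := fun x' => Finset.univ.sup' Finset.univ_nonempty (fun a' : A => Q s' (x', a'))
    have hVd : ∀ x', |Vs x' - Vs' x'| ≤ D := fun x' =>
      abs_sup'_sub_sup'_le (fun a' => abs_le_supNorm (fun xa => Q s xa - Q s' xa) (x', a'))
    have hVb : ∀ x', |Vs' x'| ≤ M := fun x' =>
      le_trans (abs_sup'_le (fun a' => abs_le_supNorm (Q s') (x', a'))) (hM s' hs')
    have hsplit : (∑ x' : X, p s xa x' * Vs x') - ∑ x' : X, p s' xa x' * Vs' x' =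
        ∑ x' : X, (p s xa x' * (Vs x' - Vs' x') + (p s xa x' - p s' xa x') * Vs' x') := by
      rw [← Finset.sum_sub_distrib]
      exact Finset.sum_congr rfl fun x' _ => by ring
    have hsumbd : |(∑ x' : X, p s xa x' * Vs x') - ∑ x' : X, p s' xa x' * Vs' x'| ≤
        D + c * (Lp * ε * M) := by
      rw [hsplit]
      calc |∑ x' : X, (p s xa x' * (Vs x' - Vs' x') + (p s xa x' - p s' xa x') * Vs' x')|
          ≤ ∑ x' : X, |p s xa x' * (Vs x' - Vs' x') + (p s xa x' - p s' xa x') * Vs' x'| :=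
            Finset.abs_sum_le_sum_abs _ _
        _ ≤ ∑ x' : X, (p s xa x' * D + Lp * ε * M) := by
            refine Finset.sum_le_sum fun x' _ => ?_
            calc |p s xa x' * (Vs x' - Vs' x') + (p s xa x' - p s' xa x') * Vs' x'|
                ≤ |p s xa x' * (Vs x' - Vs' x')| + |(p s xa x' - p s' xa x') * Vs' x'| :=
                  abs_add_le _ _
              _ ≤ p s xa x' * D + Lp * ε * M := by
                  rw [abs_mul, abs_mul, abs_of_nonneg (hp0 s hs xa x')]
                  exact add_le_add
                    (mul_le_mul_of_nonneg_left (hVd x') (hp0 s hs xa x'))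
                    (mul_le_mul (hLp s hs s' hs' xa x') (hVb x') (abs_nonneg _)
                      (by positivity))
        _ = D + c * (Lp * ε * M) := by
            rw [Finset.sum_add_distrib, ← Finset.sum_mul, hp1 s hs, one_mul,
              Finset.sum_const, Finset.card_univ, nsmul_eq_mul, hcdef]
    calc |(r s xa + α * ∑ x' : X, p s xa x' * Vs x') -
          (r s' xa + α * ∑ x' : X, p s' xa x' * Vs' x')|
        = |(r s xa - r s' xa) + α * ((∑ x' : X, p s xa x' * Vs x') -
          ∑ x' : X, p s' xa x' * Vs' x')| := by ring_nf
      _ ≤ |r s xa - r s' xa| + |α * ((∑ x' : X, p s xa x' * Vs x') -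
          ∑ x' : X, p s' xa x' * Vs' x')| := abs_add_le _ _
      _ ≤ Lr * ε + α * (D + c * (Lp * ε * M)) := by
          rw [abs_mul, abs_of_nonneg hα0]
          exact add_le_add (hLr s hs s' hs' xa) (mul_le_mul_of_nonneg_left hsumbd hα0)
      _ = Lr * ε + α * D + α * (c * (Lp * ε * M)) := by ring
  have hMe : M * (1 - α) = Rmax := div_mul_cancel₀ _ h1α.ne'
  rw [div_mul_eq_mul_div, le_div_iff₀ (pow_pos h1α 2)]
  have key2 : (1 - α) * D ≤ Lr * ε + α * (c * (Lp * ε * M)) := by linarith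
  have key3 := mul_le_mul_of_nonneg_left key2 h1α.le
  have heq : (1 - α) * (Lr * ε + α * (c * (Lp * ε * M))) =
      (1 - α) * Lr * ε + α * c * Lp * ε * (M * (1 - α)) := by ring
  rw [heq, hMe] at key3
  nlinarith [key3]
end

section
/- Under assumptions (i)–(iii), suppose additionally that ‖a − b‖ ≤ C0 for all a, b ∈ S. Then for every s*, s' ∈ S and every integer N ≥ 1 such that the convex combination s̃ := ((N−1)/N) · s* + (1/N) · s' lies in S, one has ‖Q_{s̃} − Q_{s*}‖∞ ≤ C_MF / N, where C_MF = C0 · ((1 − α) L_r + α R_max |X| L_p) / (1 − α)². -/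
open Finset

open Finset

lemma sup'_abs_le {A : Type*} [Fintype A] [Nonempty A] (f : A → ℝ) (M : ℝ)
    (h : ∀ a, |f a| ≤ M) :
    |Finset.univ.sup' Finset.univ_nonempty f| ≤ M := by
  rw [abs_le]
  obtain ⟨a0⟩ := (inferInstance : Nonempty A)
  constructor
  · exact le_trans (by linarith [(abs_le.mp (h a0)).1]) (Finset.le_sup' f (Finset.mem_univ a0))
  · exact Finset.sup'_le _ f (fun a _ => (abs_le.mp (h a)).2)

lemma sup'_abs_diff {A : Type*} [Fintype A] [Nonempty A] (f g : A → ℝ) (M : ℝ)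
    (h : ∀ a, |f a - g a| ≤ M) :
    |Finset.univ.sup' Finset.univ_nonempty f - Finset.univ.sup' Finset.univ_nonempty g| ≤ M := by
  rw [abs_sub_le_iff]
  constructor
  · rw [sub_le_iff_le_add]
    refine Finset.sup'_le _ f (fun a _ => ?_)
    have := (abs_le.mp (h a)).2
    have hg := Finset.le_sup' g (Finset.mem_univ a)
    linarith
  · rw [sub_le_iff_le_add]
    refine Finset.sup'_le _ g (fun a _ => ?_)
    have := (abs_le.mp (h a)).1
    have hf := Finset.le_sup' f (Finset.mem_univ a)
    linarith
/-- Under assumptions (i)–(iii), with diameter of `S` bounded by `C0`: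
for every `s*, s' ∈ S` and integer `N ≥ 1` such that `s̃ = ((N−1)/N) • s* + (1/N) • s'`
lies in `S`, one has `‖Q_{s̃} − Q_{s*}‖∞ ≤ C_MF / N`, where
`C_MF = C0 * ((1 − α) L_r + α R_max |X| L_p) / (1 − α)²`. -/
theorem mean_field_perturbation_q_bound
    {X A : Type*} [Fintype X] [Fintype A] [Nonempty X] [Nonempty A]
    {E : Type*} [NormedAddCommGroup E] [NormedSpace ℝ E]
    (S : Set E) (hS : S.Nonempty)
    (α : ℝ) (hα0 : 0 ≤ α) (hα1 : α < 1)
    (r : E → X × A → ℝ) (p : E → X × A → X → ℝ)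
    (hp0 : ∀ s ∈ S, ∀ xa x', 0 ≤ p s xa x')
    (hp1 : ∀ s ∈ S, ∀ xa, ∑ x' : X, p s xa x' = 1)
    (Rmax : ℝ) (hRmax : 0 ≤ Rmax)
    (hR : ∀ s ∈ S, ∀ xa : X × A, |r s xa| ≤ Rmax)
    (Lr : ℝ) (hLr0 : 0 ≤ Lr)
    (hLr : ∀ s ∈ S, ∀ s' ∈ S, ∀ xa : X × A, |r s xa - r s' xa| ≤ Lr * ‖s - s'‖)
    (Lp : ℝ) (hLp0 : 0 ≤ Lp)
    (hLp : ∀ s ∈ S, ∀ s' ∈ S, ∀ xa x', |p s xa x' - p s' xa x'| ≤ Lp * ‖s - s'‖)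
    (Q : E → X × A → ℝ)
    (hQfix : ∀ s ∈ S, bellmanOp (r s) (p s) α (Q s) = Q s)
    (C0 : ℝ) (hC0 : ∀ a ∈ S, ∀ b ∈ S, ‖a - b‖ ≤ C0)
    (sstar s' : E) (hsstar : sstar ∈ S) (hs' : s' ∈ S)
    (N : ℕ) (hN : 1 ≤ N)
    (hstilde : ((((N : ℝ) - 1) / N) • sstar + ((1 : ℝ) / N) • s') ∈ S) :
    supNorm (fun xa =>
        Q ((((N : ℝ) - 1) / N) • sstar + ((1 : ℝ) / N) • s') xa - Q sstar xa) ≤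
      C0 * ((1 - α) * Lr + α * Rmax * (Fintype.card X) * Lp) / (1 - α) ^ 2 / N := by
  set st : E := (((N : ℝ) - 1) / N) • sstar + ((1 : ℝ) / N) • s' with hst
  have hNpos : (0 : ℝ) < N := by exact_mod_cast Nat.lt_of_lt_of_le Nat.zero_lt_one hN
  have hNne : (N : ℝ) ≠ 0 := ne_of_gt hNpos
  have h1α : (0 : ℝ) < 1 - α := by linarith
  -- the value function
  set V : E → X → ℝ := fun s x' => Finset.univ.sup' Finset.univ_nonempty (fun a' : A => Q s (x', a')) with hV
  -- Q expansion from fixed point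
  have hQeq : ∀ s ∈ S, ∀ xa : X × A,
      Q s xa = r s xa + α * ∑ x' : X, p s xa x' * V s x' := by
    intro s hs xa
    conv_lhs => rw [← hQfix s hs]
    rfl
  -- bound on supNorm (Q s) for s ∈ S
  have hQbound : ∀ s ∈ S, supNorm (Q s) ≤ Rmax / (1 - α) := by
    intro s hs
    have key : supNorm (Q s) ≤ Rmax + α * supNorm (Q s) := by
      refine Finset.sup'_le _ _ (fun xa _ => ?_)
      rw [hQeq s hs xa]
      have hsum : |∑ x' : X, p s xa x' * V s x'| ≤ supNorm (Q s) := by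
        calc |∑ x' : X, p s xa x' * V s x'| ≤ ∑ x' : X, |p s xa x' * V s x'| :=
              Finset.abs_sum_le_sum_abs _ _
          _ ≤ ∑ x' : X, p s xa x' * supNorm (Q s) := by
              refine Finset.sum_le_sum (fun x' _ => ?_)
              rw [abs_mul, abs_of_nonneg (hp0 s hs xa x')]
              refine mul_le_mul_of_nonneg_left ?_ (hp0 s hs xa x')
              exact sup'_abs_le _ _ (fun a' => Finset.le_sup' (fun xa : X × A => |Q s xa|) (Finset.mem_univ (x', a')))
          _ = supNorm (Q s) := by rw [← Finset.sum_mul, hp1 s hs xa, one_mul]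
      calc |r s xa + α * ∑ x' : X, p s xa x' * V s x'|
          ≤ |r s xa| + |α * ∑ x' : X, p s xa x' * V s x'| := abs_add_le _ _
        _ ≤ Rmax + α * supNorm (Q s) := by
            rw [abs_mul, abs_of_nonneg hα0]
            exact add_le_add (hR s hs xa) (mul_le_mul_of_nonneg_left hsum hα0)
    rw [le_div_iff₀ h1α]
    linarith
  -- distance bound
  have hdist : ‖st - sstar‖ ≤ C0 / N := by
    have heq : st - sstar = ((1 : ℝ) / N) • (s' - sstar) := by
      have hco : ((N : ℝ) - 1) / N = 1 - 1 / N := by field_simp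
      rw [hst, hco, sub_smul, one_smul, smul_sub]
      abel
    rw [heq, norm_smul]
    have : ‖(1 : ℝ) / N‖ = 1 / N := by
      rw [Real.norm_eq_abs, abs_of_pos (by positivity)]
    rw [this]
    rw [div_mul_eq_mul_div, one_mul, div_le_div_iff₀ hNpos hNpos]
    have := hC0 s' hs' sstar hsstar
    nlinarith
  -- main contraction-style bound
  set D : ℝ := supNorm (fun xa => Q st xa - Q sstar xa) with hD
  set d : ℝ := ‖st - sstar‖ with hd
  have hd0 : 0 ≤ d := norm_nonneg _
  have hM := hQbound sstar hsstar
  have hDle : D ≤ Lr * d + α * (D + (Fintype.card X) * (Lp * d) * (Rmax / (1 - α))) := by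
    refine Finset.sup'_le _ _ (fun xa _ => ?_)
    simp only
    rw [hQeq st hstilde xa, hQeq sstar hsstar xa]
    have hsplit : (r st xa + α * ∑ x' : X, p st xa x' * V st x') -
        (r sstar xa + α * ∑ x' : X, p sstar xa x' * V sstar x') =
        (r st xa - r sstar xa) +
        α * ((∑ x' : X, p st xa x' * (V st x' - V sstar x')) +
             (∑ x' : X, (p st xa x' - p sstar xa x') * V sstar x')) := by
      rw [← Finset.sum_add_distrib]
      have hterm : ∀ x' : X, p st xa x' * (V st x' - V sstar x') +
          (p st xa x' - p sstar xa x') * V sstar x' =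
          p st xa x' * V st x' - p sstar xa x' * V sstar x' := fun x' => by ring
      simp_rw [hterm]
      rw [Finset.sum_sub_distrib]
      ring
    rw [hsplit]
    have h1 : |∑ x' : X, p st xa x' * (V st x' - V sstar x')| ≤ D := by
      calc |∑ x' : X, p st xa x' * (V st x' - V sstar x')|
          ≤ ∑ x' : X, |p st xa x' * (V st x' - V sstar x')| := Finset.abs_sum_le_sum_abs _ _
        _ ≤ ∑ x' : X, p st xa x' * D := by
            refine Finset.sum_le_sum (fun x' _ => ?_)
            rw [abs_mul, abs_of_nonneg (hp0 st hstilde xa x')]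
            refine mul_le_mul_of_nonneg_left ?_ (hp0 st hstilde xa x')
            exact sup'_abs_diff _ _ _ (fun a' =>
              Finset.le_sup' (fun xa : X × A => |Q st xa - Q sstar xa|) (Finset.mem_univ (x', a')))
        _ = D := by rw [← Finset.sum_mul, hp1 st hstilde xa, one_mul]
    have h2 : |∑ x' : X, (p st xa x' - p sstar xa x') * V sstar x'| ≤
        (Fintype.card X) * (Lp * d) * (Rmax / (1 - α)) := by
      calc |∑ x' : X, (p st xa x' - p sstar xa x') * V sstar x'|
          ≤ ∑ x' : X, |(p st xa x' - p sstar xa x') * V sstar x'| := Finset.abs_sum_le_sum_abs _ _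
        _ ≤ ∑ _x' : X, (Lp * d) * (Rmax / (1 - α)) := by
            refine Finset.sum_le_sum (fun x' _ => ?_)
            rw [abs_mul]
            refine mul_le_mul (hLp st hstilde sstar hsstar xa x') ?_ (abs_nonneg _)
              (by positivity)
            refine sup'_abs_le _ _ (fun a' => ?_)
            exact le_trans (Finset.le_sup' (fun xa : X × A => |Q sstar xa|)
              (Finset.mem_univ (x', a'))) hM
        _ = (Fintype.card X) * (Lp * d) * (Rmax / (1 - α)) := by
            rw [Finset.sum_const, Finset.card_univ, nsmul_eq_mul]
            ring
    have hr' := hLr st hstilde sstar hsstar xa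
    calc |(r st xa - r sstar xa) + α * ((∑ x' : X, p st xa x' * (V st x' - V sstar x')) +
             (∑ x' : X, (p st xa x' - p sstar xa x') * V sstar x'))|
        ≤ |r st xa - r sstar xa| + α * |(∑ x' : X, p st xa x' * (V st x' - V sstar x')) +
             (∑ x' : X, (p st xa x' - p sstar xa x') * V sstar x')| := by
          refine le_trans (abs_add_le _ _) ?_
          rw [abs_mul, abs_of_nonneg hα0]
      _ ≤ Lr * d + α * (D + (Fintype.card X) * (Lp * d) * (Rmax / (1 - α))) := by
          refine add_le_add hr' (mul_le_mul_of_nonneg_left ?_ hα0)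
          exact le_trans (abs_add_le _ _) (add_le_add h1 h2)
  -- solve for D
  have hDd : D ≤ ((1 - α) * Lr + α * Rmax * (Fintype.card X) * Lp) / (1 - α) ^ 2 * d := by
    rw [div_mul_eq_mul_div, le_div_iff₀ (by positivity)]
    have hcard : (0:ℝ) ≤ (Fintype.card X : ℝ) := by positivity
    have expand : α * ((Fintype.card X) * (Lp * d) * (Rmax / (1 - α))) * (1 - α)
        = α * (Fintype.card X) * Lp * d * Rmax := by field_simp
    nlinarith [mul_le_mul_of_nonneg_right hDle (le_of_lt h1α)]
  have hK : (0:ℝ) ≤ ((1 - α) * Lr + α * Rmax * (Fintype.card X) * Lp) / (1 - α) ^ 2 := by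
    have hcard : (0:ℝ) ≤ (Fintype.card X : ℝ) := by positivity
    positivity
  calc D ≤ ((1 - α) * Lr + α * Rmax * (Fintype.card X) * Lp) / (1 - α) ^ 2 * d := hDd
    _ ≤ ((1 - α) * Lr + α * Rmax * (Fintype.card X) * Lp) / (1 - α) ^ 2 * (C0 / N) :=
        mul_le_mul_of_nonneg_left hdist hK
    _ = C0 * ((1 - α) * Lr + α * Rmax * (Fintype.card X) * Lp) / (1 - α) ^ 2 / N := by ring
end

section
/- Under assumptions (i)–(iii), suppose additionally that ‖a − b‖ ≤ C0 for all a, b ∈ S, and that the equilibrium Q-function Q_{s*} has action gap δ > 0, i.e. there is π* : X → A with Q_{s*}(x, π*(x)) − Q_{s*}(x, a) ≥ δ for all x ∈ X and all a ≠ π*(x). If the population size N satisfies N > 2 · C_MF / δ, where C_MF = C0 · ((1 − α) L_r + α R_max |X| L_p) / (1 − α)², then for every s' ∈ S such that s̃ := ((N−1)/N) · s* + (1/N) · s' lies in S, the optimal policies of the perturbed and equilibrium problems agree: for every x ∈ X, π*(x) is the unique maximizer of Q_{s̃}(x, ·). -/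
open Finset

section Aux

variable {X A : Type*} [Fintype X] [Fintype A] [Nonempty X] [Nonempty A]

/-- The value function `V(x') = max_{a'} Q(x',a')`. -/
noncomputable def Vfun (Q : X × A → ℝ) (x' : X) : ℝ :=
  Finset.univ.sup' Finset.univ_nonempty (fun a' : A => Q (x', a'))

lemma abs_Vfun_le {Q : X × A → ℝ} {K : ℝ} (h : ∀ xa, |Q xa| ≤ K) (x' : X) :
    |Vfun Q x'| ≤ K := by
  obtain ⟨a0, -, ha0⟩ := Finset.exists_mem_eq_sup' Finset.univ_nonempty
    (fun a' : A => Q (x', a'))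
  rw [Vfun, ha0]; exact h _

lemma abs_Vfun_sub_le {Q Q' : X × A → ℝ} {K : ℝ} (h : ∀ xa, |Q xa - Q' xa| ≤ K) (x' : X) :
    |Vfun Q x' - Vfun Q' x'| ≤ K := by
  rw [abs_sub_le_iff]
  constructor
  · rw [sub_le_iff_le_add]
    apply Finset.sup'_le
    intro a _
    have h1 := (abs_le.mp (h (x', a))).2
    have h2 : Q' (x', a) ≤ Vfun Q' x' :=
      Finset.le_sup' (fun a' : A => Q' (x', a')) (Finset.mem_univ a)
    linarith [h1, h2]
  · rw [sub_le_iff_le_add]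
    apply Finset.sup'_le
    intro a _
    have h1 := (abs_le.mp (h (x', a))).1
    have h2 : Q (x', a) ≤ Vfun Q x' :=
      Finset.le_sup' (fun a' : A => Q (x', a')) (Finset.mem_univ a)
    linarith [h1, h2]

lemma abs_sum_pV_le {p : X → ℝ} (hp0 : ∀ x', 0 ≤ p x') (hp1 : ∑ x' : X, p x' = 1)
    {V : X → ℝ} {K : ℝ} (hV : ∀ x', |V x'| ≤ K) :
    |∑ x' : X, p x' * V x'| ≤ K := by
  calc |∑ x' : X, p x' * V x'| ≤ ∑ x' : X, |p x' * V x'| := Finset.abs_sum_le_sum_abs _ _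
    _ = ∑ x' : X, p x' * |V x'| := by
        refine Finset.sum_congr rfl fun x' _ => ?_
        rw [abs_mul, abs_of_nonneg (hp0 x')]
    _ ≤ ∑ x' : X, p x' * K := by
        refine Finset.sum_le_sum fun x' _ => ?_
        exact mul_le_mul_of_nonneg_left (hV x') (hp0 x')
    _ = K := by rw [← Finset.sum_mul, hp1, one_mul]

/-- A fixed point of the Bellman operator is bounded by `Rmax / (1 - α)`. -/
lemma qbound (r : X × A → ℝ) (p : X × A → X → ℝ) (α Rmax : ℝ)
    (hα0 : 0 ≤ α) (hα1 : α < 1)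
    (hp0 : ∀ xa x', 0 ≤ p xa x') (hp1 : ∀ xa, ∑ x' : X, p xa x' = 1)
    (hR : ∀ xa, |r xa| ≤ Rmax)
    (Q : X × A → ℝ) (hQ : bellmanOp r p α Q = Q) :
    ∀ xa, |Q xa| ≤ Rmax / (1 - α) := by
  have h1α : (0:ℝ) < 1 - α := by linarith
  set K := (Finset.univ : Finset (X × A)).sup' Finset.univ_nonempty (fun xa => |Q xa|) with hKdef
  have hK : ∀ xa, |Q xa| ≤ K := fun xa =>
    Finset.le_sup' (fun xa : X × A => |Q xa|) (Finset.mem_univ xa)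
  have hKle : K ≤ Rmax + α * K := by
    obtain ⟨xa0, -, h0⟩ := Finset.exists_mem_eq_sup' Finset.univ_nonempty
      (fun xa : X × A => |Q xa|)
    have hfix := congrFun hQ xa0
    have hsum : |∑ x' : X, p xa0 x' * Vfun Q x'| ≤ K :=
      abs_sum_pV_le (hp0 xa0) (hp1 xa0) (abs_Vfun_le hK)
    calc K = |Q xa0| := h0
      _ = |r xa0 + α * ∑ x' : X, p xa0 x' * Vfun Q x'| := by
          rw [← hfix]; rfl
      _ ≤ |r xa0| + |α| * |∑ x' : X, p xa0 x' * Vfun Q x'| := by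
          rw [← abs_mul]; exact abs_add_le _ _
      _ ≤ Rmax + α * K := by
          rw [abs_of_nonneg hα0]
          exact add_le_add (hR xa0) (mul_le_mul_of_nonneg_left hsum hα0)
  intro xa
  refine (hK xa).trans ?_
  rw [le_div_iff₀ h1α]
  nlinarith [hKle]

/-- Lipschitz estimate for fixed points of Bellman operators. -/
lemma qlip (r r' : X × A → ℝ) (p p' : X × A → X → ℝ) (α Rmax Lr Lp d : ℝ)
    (hα0 : 0 ≤ α) (hα1 : α < 1) (hRmax : 0 ≤ Rmax) (hLr0 : 0 ≤ Lr) (hLp0 : 0 ≤ Lp)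
    (hd : 0 ≤ d)
    (hp0 : ∀ xa x', 0 ≤ p xa x') (hp1 : ∀ xa, ∑ x' : X, p xa x' = 1)
    (hp0' : ∀ xa x', 0 ≤ p' xa x') (hp1' : ∀ xa, ∑ x' : X, p' xa x' = 1)
    (hR : ∀ xa, |r xa| ≤ Rmax) (hR' : ∀ xa, |r' xa| ≤ Rmax)
    (hrr : ∀ xa, |r xa - r' xa| ≤ Lr * d)
    (hpp : ∀ xa x', |p xa x' - p' xa x'| ≤ Lp * d)
    (Q Q' : X × A → ℝ)
    (hQ : bellmanOp r p α Q = Q) (hQ' : bellmanOp r' p' α Q' = Q') :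
    ∀ xa, |Q xa - Q' xa| ≤
      ((1 - α) * Lr + α * Rmax * (Fintype.card X) * Lp) / (1 - α) ^ 2 * d := by
  have h1α : (0:ℝ) < 1 - α := by linarith
  have hQ'b : ∀ xa, |Q' xa| ≤ Rmax / (1 - α) :=
    qbound r' p' α Rmax hα0 hα1 hp0' hp1' hR' Q' hQ'
  set D := (Finset.univ : Finset (X × A)).sup' Finset.univ_nonempty
    (fun xa => |Q xa - Q' xa|) with hDdef
  have hD : ∀ xa, |Q xa - Q' xa| ≤ D := fun xa =>
    Finset.le_sup' (fun xa : X × A => |Q xa - Q' xa|) (Finset.mem_univ xa)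
  have hDle : D ≤ Lr * d + α * D + α * ((Fintype.card X) * (Lp * d) * (Rmax / (1 - α))) := by
    obtain ⟨xa0, -, h0⟩ := Finset.exists_mem_eq_sup' Finset.univ_nonempty
      (fun xa : X × A => |Q xa - Q' xa|)
    have hfix := congrFun hQ xa0
    have hfix' := congrFun hQ' xa0
    have key : Q xa0 - Q' xa0 = (r xa0 - r' xa0) +
        α * ∑ x' : X, (p xa0 x' * (Vfun Q x' - Vfun Q' x') +
          (p xa0 x' - p' xa0 x') * Vfun Q' x') := by
      rw [← hfix, ← hfix']
      show (r xa0 + α * ∑ x' : X, p xa0 x' * Vfun Q x') -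
        (r' xa0 + α * ∑ x' : X, p' xa0 x' * Vfun Q' x') = _
      have hsum : ∑ x' : X, (p xa0 x' * (Vfun Q x' - Vfun Q' x') +
          (p xa0 x' - p' xa0 x') * Vfun Q' x')
          = (∑ x' : X, p xa0 x' * Vfun Q x') - ∑ x' : X, p' xa0 x' * Vfun Q' x' := by
        rw [← Finset.sum_sub_distrib]
        exact Finset.sum_congr rfl fun x' _ => by ring
      rw [hsum]; ring
    have hsum1 : |∑ x' : X, p xa0 x' * (Vfun Q x' - Vfun Q' x')| ≤ D := by
      have : ∀ x', |Vfun Q x' - Vfun Q' x'| ≤ D := abs_Vfun_sub_le hD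
      exact abs_sum_pV_le (hp0 xa0) (hp1 xa0) this
    have hsum2 : |∑ x' : X, (p xa0 x' - p' xa0 x') * Vfun Q' x'| ≤
        (Fintype.card X) * (Lp * d) * (Rmax / (1 - α)) := by
      calc |∑ x' : X, (p xa0 x' - p' xa0 x') * Vfun Q' x'|
          ≤ ∑ x' : X, |(p xa0 x' - p' xa0 x') * Vfun Q' x'| :=
            Finset.abs_sum_le_sum_abs _ _
        _ ≤ ∑ x' : X, (Lp * d) * (Rmax / (1 - α)) := by
            refine Finset.sum_le_sum fun x' _ => ?_
            rw [abs_mul]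
            exact mul_le_mul (hpp xa0 x') (abs_Vfun_le hQ'b x') (abs_nonneg _)
              (by positivity)
        _ = (Fintype.card X) * (Lp * d) * (Rmax / (1 - α)) := by
            rw [Finset.sum_const, Finset.card_univ, nsmul_eq_mul]; ring
    calc D = |Q xa0 - Q' xa0| := h0
      _ ≤ |r xa0 - r' xa0| + |α| * |∑ x' : X, (p xa0 x' * (Vfun Q x' - Vfun Q' x') +
            (p xa0 x' - p' xa0 x') * Vfun Q' x')| := by
          rw [key, ← abs_mul]; exact abs_add_le _ _
      _ ≤ Lr * d + α * (D + (Fintype.card X) * (Lp * d) * (Rmax / (1 - α))) := by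
          rw [abs_of_nonneg hα0]
          refine add_le_add (hrr xa0) (mul_le_mul_of_nonneg_left ?_ hα0)
          calc |∑ x' : X, (p xa0 x' * (Vfun Q x' - Vfun Q' x') +
                (p xa0 x' - p' xa0 x') * Vfun Q' x')|
              = |(∑ x' : X, p xa0 x' * (Vfun Q x' - Vfun Q' x')) +
                 ∑ x' : X, (p xa0 x' - p' xa0 x') * Vfun Q' x'| := by
                rw [← Finset.sum_add_distrib]
            _ ≤ _ + _ := abs_add_le _ _
            _ ≤ D + (Fintype.card X) * (Lp * d) * (Rmax / (1 - α)) :=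
                add_le_add hsum1 hsum2
      _ = Lr * d + α * D + α * ((Fintype.card X) * (Lp * d) * (Rmax / (1 - α))) := by ring
  intro xa
  refine (hD xa).trans ?_
  rw [div_mul_eq_mul_div, le_div_iff₀ (by positivity)]
  have hdiv : (1 - α) * (Rmax / (1 - α)) = Rmax := by field_simp
  have h2 : (1 - α) * D ≤ (1 - α) * (Lr * d) + α * ((1 - α) * D) +
      α * ((Fintype.card X) * (Lp * d) * Rmax) := by
    have h3 := mul_le_mul_of_nonneg_left hDle h1α.le
    calc (1 - α) * D ≤ (1 - α) * (Lr * d + α * D +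
        α * ((Fintype.card X) * (Lp * d) * (Rmax / (1 - α)))) := h3
      _ = (1 - α) * (Lr * d) + α * ((1 - α) * D) +
          α * ((Fintype.card X) * ((1 - α) * (Rmax / (1 - α))) * (Lp * d)) := by ring
      _ = _ := by rw [hdiv]; ring
  nlinarith [h2]

end Aux

/-- Under assumptions (i)–(iii), with diameter of `S` bounded by `C0`,
suppose the equilibrium Q-function `Q_{s*}` has action gap `δ > 0` at `π*`. If the
population size `N` satisfies `N > 2 C_MF / δ`, where
`C_MF = C0 * ((1 − α) L_r + α R_max |X| L_p) / (1 − α)²`, then for every `s' ∈ S` such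
that `s̃ = ((N−1)/N) • s* + (1/N) • s'` lies in `S`, the optimal policies of the perturbed
and equilibrium problems agree: `π*(x)` is the unique maximizer of `Q_{s̃}(x, ·)`. -/
theorem perturbed_optimal_policy_agrees
    {X A : Type*} [Fintype X] [Fintype A] [Nonempty X] [Nonempty A]
    {E : Type*} [NormedAddCommGroup E] [NormedSpace ℝ E]
    (S : Set E) (hS : S.Nonempty)
    (α : ℝ) (hα0 : 0 ≤ α) (hα1 : α < 1)
    (r : E → X × A → ℝ) (p : E → X × A → X → ℝ)
    (hp0 : ∀ s ∈ S, ∀ xa x', 0 ≤ p s xa x')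
    (hp1 : ∀ s ∈ S, ∀ xa, ∑ x' : X, p s xa x' = 1)
    (Rmax : ℝ) (hRmax : 0 ≤ Rmax)
    (hR : ∀ s ∈ S, ∀ xa : X × A, |r s xa| ≤ Rmax)
    (Lr : ℝ) (hLr0 : 0 ≤ Lr)
    (hLr : ∀ s ∈ S, ∀ s' ∈ S, ∀ xa : X × A, |r s xa - r s' xa| ≤ Lr * ‖s - s'‖)
    (Lp : ℝ) (hLp0 : 0 ≤ Lp)
    (hLp : ∀ s ∈ S, ∀ s' ∈ S, ∀ xa x', |p s xa x' - p s' xa x'| ≤ Lp * ‖s - s'‖)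
    (Q : E → X × A → ℝ)
    (hQfix : ∀ s ∈ S, bellmanOp (r s) (p s) α (Q s) = Q s)
    (C0 : ℝ) (hC0 : ∀ a ∈ S, ∀ b ∈ S, ‖a - b‖ ≤ C0)
    (sstar : E) (hsstar : sstar ∈ S)
    (δ : ℝ) (hδ : 0 < δ) (πstar : X → A)
    (hgap : ∀ x : X, ∀ a : A, a ≠ πstar x → δ ≤ Q sstar (x, πstar x) - Q sstar (x, a))
    (N : ℕ)
    (hN : (N : ℝ) >
      2 * (C0 * ((1 - α) * Lr + α * Rmax * (Fintype.card X) * Lp) / (1 - α) ^ 2) / δ) :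
    ∀ s' ∈ S,
      ((((N : ℝ) - 1) / N) • sstar + ((1 : ℝ) / N) • s') ∈ S →
      ∀ x : X, ∀ a : A, a ≠ πstar x →
        Q ((((N : ℝ) - 1) / N) • sstar + ((1 : ℝ) / N) • s') (x, a) <
          Q ((((N : ℝ) - 1) / N) • sstar + ((1 : ℝ) / N) • s') (x, πstar x) := by
  intro s' hs' hst x a ha
  have h1α : (0:ℝ) < 1 - α := by linarith
  set M := ((1 - α) * Lr + α * Rmax * (Fintype.card X) * Lp) / (1 - α) ^ 2 with hMdef
  have hnum : 0 ≤ (1 - α) * Lr + α * Rmax * (Fintype.card X : ℝ) * Lp :=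
    add_nonneg (mul_nonneg h1α.le hLr0)
      (mul_nonneg (mul_nonneg (mul_nonneg hα0 hRmax) (Nat.cast_nonneg _)) hLp0)
  have hM0 : 0 ≤ M := div_nonneg hnum (by positivity)
  have hC00 : 0 ≤ C0 := by
    have := hC0 sstar hsstar sstar hsstar
    simpa using this
  have hN2 : 2 * (C0 * M) / δ < (N : ℝ) := by rw [hMdef, mul_div_assoc']; exact hN
  have hCMF0 : 0 ≤ 2 * (C0 * M) / δ := by positivity
  have hNpos : (0:ℝ) < N := lt_of_le_of_lt hCMF0 hN2
  set st := ((((N : ℝ) - 1) / N) • sstar + ((1 : ℝ) / N) • s') with hstdef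
  -- distance from st to sstar
  have hstdist : ‖st - sstar‖ ≤ C0 / N := by
    have hNne : (N:ℝ) ≠ 0 := ne_of_gt hNpos
    have hkey : st - sstar = ((1:ℝ)/N) • (s' - sstar) := by
      rw [hstdef, smul_sub]
      have h : ((N:ℝ) - 1) / N = 1 - 1 / N := by field_simp
      rw [h, sub_smul, one_smul]
      abel
    rw [hkey, norm_smul]
    have h1 : ‖(1:ℝ)/N‖ = 1/N := by
      rw [Real.norm_eq_abs, abs_of_pos (by positivity)]
    rw [h1, div_mul_eq_mul_div, one_mul]
    gcongr
    exact hC0 s' hs' sstar hsstar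
  -- Lipschitz bound on Q
  have hlip : ∀ xa, |Q st xa - Q sstar xa| ≤ M * ‖st - sstar‖ := by
    apply qlip (r st) (r sstar) (p st) (p sstar) α Rmax Lr Lp ‖st - sstar‖
      hα0 hα1 hRmax hLr0 hLp0 (norm_nonneg _)
      (hp0 st hst) (hp1 st hst) (hp0 sstar hsstar) (hp1 sstar hsstar)
      (hR st hst) (hR sstar hsstar)
      (hLr st hst sstar hsstar) (hLp st hst sstar hsstar)
      (Q st) (Q sstar) (hQfix st hst) (hQfix sstar hsstar)
  have hlip' : ∀ xa, |Q st xa - Q sstar xa| ≤ M * (C0 / N) := fun xa =>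
    (hlip xa).trans (mul_le_mul_of_nonneg_left hstdist hM0)
  -- M * (C0/N) < δ/2
  have hsmall : M * (C0 / N) < δ / 2 := by
    have h1 : 2 * (C0 * M) < N * δ := by rwa [div_lt_iff₀ hδ] at hN2
    rw [show M * (C0 / (N:ℝ)) = M * C0 / N from mul_div_assoc' M C0 N,
      div_lt_div_iff₀ hNpos (by norm_num : (0:ℝ) < 2)]
    nlinarith [h1]
  have h1 := abs_le.mp (hlip' (x, a))
  have h2 := abs_le.mp (hlip' (x, πstar x))
  have h3 := hgap x a ha
  linarith [h1.1, h1.2, h2.1, h2.2]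
end

section
/- (Main suboptimality bound.) Under assumptions (i)–(iii), suppose additionally that ‖a − b‖ ≤ C0 for all a, b ∈ S. Let s*, s' ∈ S, let N ≥ 1 be an integer such that s̃ := ((N−1)/N) · s* + (1/N) · s' lies in S, and let Q̂ : X × A → ℝ be a learned Q-function satisfying the DQN approximation guarantee max_{(x,a)} |Q̂(x,a) − Q_{s̃}(x,a)| ≤ C_DQN / √(N_s) for some constants C_DQN ≥ 0 and buffer size N_s > 0. Then max_{(x,a)} |Q̂(x,a) − Q_{s*}(x,a)| ≤ C_DQN / √(N_s) + C_MF / N, where C_MF = C0 · ((1 − α) L_r + α R_max |X| L_p) / (1 − α)². -/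
open Finset

lemma mySup_abs_le {ι : Type*} [Fintype ι] [Nonempty ι] (f : ι → ℝ) {B : ℝ}
    (h : ∀ i, |f i| ≤ B) : |Finset.univ.sup' Finset.univ_nonempty f| ≤ B := by
  obtain ⟨i, -, hi⟩ := Finset.exists_mem_eq_sup' Finset.univ_nonempty f
  rw [hi]; exact h i

lemma mySup_sub_le {ι : Type*} [Fintype ι] [Nonempty ι] (f g : ι → ℝ) {B : ℝ}
    (h : ∀ i, |f i - g i| ≤ B) :
    |Finset.univ.sup' Finset.univ_nonempty f - Finset.univ.sup' Finset.univ_nonempty g| ≤ B := by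
  rw [abs_sub_le_iff]
  constructor
  · rw [sub_le_iff_le_add]
    apply Finset.sup'_le; intro i _
    have h2 := (abs_le.mp (h i)).2
    calc f i ≤ g i + B := by linarith
    _ ≤ Finset.univ.sup' Finset.univ_nonempty g + B := by
        gcongr; exact Finset.le_sup' g (Finset.mem_univ i)
    _ = B + Finset.univ.sup' Finset.univ_nonempty g := add_comm _ _
  · rw [sub_le_iff_le_add]
    apply Finset.sup'_le; intro i _
    have h2 := (abs_le.mp (h i)).1
    calc g i ≤ f i + B := by linarith
    _ ≤ Finset.univ.sup' Finset.univ_nonempty f + B := by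
        gcongr; exact Finset.le_sup' f (Finset.mem_univ i)
    _ = B + Finset.univ.sup' Finset.univ_nonempty f := add_comm _ _

/-- **Main suboptimality bound.** Under assumptions (i)–(iii), with diameter
of `S` bounded by `C0`: for `s*, s' ∈ S`, `N ≥ 1` with `s̃ = ((N−1)/N) • s* + (1/N) • s' ∈ S`,
and a learned Q-function `Q̂` satisfying `max_{(x,a)} |Q̂(x,a) − Q_{s̃}(x,a)| ≤ C_DQN/√N_s`,
one has `max_{(x,a)} |Q̂(x,a) − Q_{s*}(x,a)| ≤ C_DQN/√N_s + C_MF/N`, where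
`C_MF = C0 * ((1 − α) L_r + α R_max |X| L_p) / (1 − α)²`. -/
theorem dqn_suboptimality_bound
    {X A : Type*} [Fintype X] [Fintype A] [Nonempty X] [Nonempty A]
    {E : Type*} [NormedAddCommGroup E] [NormedSpace ℝ E]
    (S : Set E) (hS : S.Nonempty)
    (α : ℝ) (hα0 : 0 ≤ α) (hα1 : α < 1)
    (r : E → X × A → ℝ) (p : E → X × A → X → ℝ)
    (hp0 : ∀ s ∈ S, ∀ xa x', 0 ≤ p s xa x')
    (hp1 : ∀ s ∈ S, ∀ xa, ∑ x' : X, p s xa x' = 1)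
    (Rmax : ℝ) (hRmax : 0 ≤ Rmax)
    (hR : ∀ s ∈ S, ∀ xa : X × A, |r s xa| ≤ Rmax)
    (Lr : ℝ) (hLr0 : 0 ≤ Lr)
    (hLr : ∀ s ∈ S, ∀ s' ∈ S, ∀ xa : X × A, |r s xa - r s' xa| ≤ Lr * ‖s - s'‖)
    (Lp : ℝ) (hLp0 : 0 ≤ Lp)
    (hLp : ∀ s ∈ S, ∀ s' ∈ S, ∀ xa x', |p s xa x' - p s' xa x'| ≤ Lp * ‖s - s'‖)
    (Q : E → X × A → ℝ)
    (hQfix : ∀ s ∈ S, bellmanOp (r s) (p s) α (Q s) = Q s)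
    (C0 : ℝ) (hC0 : ∀ a ∈ S, ∀ b ∈ S, ‖a - b‖ ≤ C0)
    (sstar s' : E) (hsstar : sstar ∈ S) (hs' : s' ∈ S)
    (N : ℕ) (hN : 1 ≤ N)
    (hstilde : ((((N : ℝ) - 1) / N) • sstar + ((1 : ℝ) / N) • s') ∈ S)
    (CDQN Ns : ℝ) (hCDQN : 0 ≤ CDQN) (hNs : 0 < Ns)
    (Qhat : X × A → ℝ)
    (hDQN : supNorm (fun xa =>
        Qhat xa - Q ((((N : ℝ) - 1) / N) • sstar + ((1 : ℝ) / N) • s') xa) ≤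
      CDQN / Real.sqrt Ns) :
    supNorm (fun xa => Qhat xa - Q sstar xa) ≤
      CDQN / Real.sqrt Ns +
        C0 * ((1 - α) * Lr + α * Rmax * (Fintype.card X) * Lp) / (1 - α) ^ 2 / N := by
  set st : E := (((N : ℝ) - 1) / N) • sstar + ((1 : ℝ) / N) • s' with hstdef
  have h1α : (0:ℝ) < 1 - α := by linarith
  set M : ℝ := Rmax / (1 - α) with hMdef
  have hM0 : 0 ≤ M := div_nonneg hRmax h1α.le
  -- sums against a probability kernel
  have hsum : ∀ s ∈ S, ∀ (xa : X × A) (m : X → ℝ) (K : ℝ), (∀ x', |m x'| ≤ K) →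
      |∑ x' : X, p s xa x' * m x'| ≤ K := by
    intro s hs xa m K hK
    calc |∑ x' : X, p s xa x' * m x'| ≤ ∑ x' : X, |p s xa x' * m x'| :=
          Finset.abs_sum_le_sum_abs _ _
    _ ≤ ∑ x' : X, p s xa x' * K := by
        apply Finset.sum_le_sum; intro x' _
        rw [abs_mul, abs_of_nonneg (hp0 s hs xa x')]
        exact mul_le_mul_of_nonneg_left (hK x') (hp0 s hs xa x')
    _ = K := by rw [← Finset.sum_mul, hp1 s hs xa, one_mul]
  -- the max over actions is bounded by the sup norm
  have hm : ∀ (q : X × A → ℝ) (x' : X),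
      |Finset.univ.sup' Finset.univ_nonempty (fun a' : A => q (x', a'))| ≤ supNorm q := by
    intro q x'
    apply mySup_abs_le
    intro a'
    exact Finset.le_sup' (fun xa : X × A => |q xa|) (Finset.mem_univ (x', a'))
  -- Step A : bound on fixed points
  have hQbound : ∀ s ∈ S, supNorm (Q s) ≤ M := by
    intro s hs
    have key : supNorm (Q s) ≤ Rmax + α * supNorm (Q s) := by
      apply Finset.sup'_le
      intro xa _
      conv_lhs => rw [← hQfix s hs]
      simp only [bellmanOp]
      calc |r s xa + α * ∑ x' : X, p s xa x' *
            Finset.univ.sup' Finset.univ_nonempty (fun a' : A => Q s (x', a'))|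
          ≤ |r s xa| + |α * ∑ x' : X, p s xa x' *
            Finset.univ.sup' Finset.univ_nonempty (fun a' : A => Q s (x', a'))| := abs_add_le _ _
      _ ≤ Rmax + α * supNorm (Q s) := by
          gcongr
          · exact hR s hs xa
          · rw [abs_mul, abs_of_nonneg hα0]
            exact mul_le_mul_of_nonneg_left
              (hsum s hs xa _ _ (fun x' => hm (Q s) x')) hα0
    rw [hMdef, le_div_iff₀ h1α]
    linarith
  -- Step B : Lipschitz bound on fixed points
  have hLip : ∀ s ∈ S, ∀ t ∈ S, supNorm (fun xa => Q s xa - Q t xa) ≤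
      (Lr + α * (Fintype.card X) * Lp * M) * ‖s - t‖ / (1 - α) := by
    intro s hs t ht
    set D : ℝ := supNorm (fun xa => Q s xa - Q t xa) with hDdef
    have key : D ≤ α * D + (Lr + α * (Fintype.card X) * Lp * M) * ‖s - t‖ := by
      apply Finset.sup'_le
      intro xa _
      have hexp : Q s xa - Q t xa =
          (r s xa - r t xa)
          + α * (∑ x' : X, p s xa x' *
              (Finset.univ.sup' Finset.univ_nonempty (fun a' : A => Q s (x', a'))
               - Finset.univ.sup' Finset.univ_nonempty (fun a' : A => Q t (x', a'))))
          + α * (∑ x' : X, (p s xa x' - p t xa x') *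
              Finset.univ.sup' Finset.univ_nonempty (fun a' : A => Q t (x', a'))) := by
        conv_lhs => rw [← hQfix s hs, ← hQfix t ht]
        simp only [bellmanOp, mul_sub, sub_mul, Finset.sum_sub_distrib]
        ring
      show |Q s xa - Q t xa| ≤ _
      rw [hexp]
      have b1 : |r s xa - r t xa| ≤ Lr * ‖s - t‖ := hLr s hs t ht xa
      have b2 : |∑ x' : X, p s xa x' *
          (Finset.univ.sup' Finset.univ_nonempty (fun a' : A => Q s (x', a'))
           - Finset.univ.sup' Finset.univ_nonempty (fun a' : A => Q t (x', a')))| ≤ D := by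
        apply hsum s hs xa _ D
        intro x'
        apply mySup_sub_le
        intro a'
        exact Finset.le_sup' (fun xa : X × A => |Q s xa - Q t xa|) (Finset.mem_univ (x', a'))
      have b3 : |∑ x' : X, (p s xa x' - p t xa x') *
          Finset.univ.sup' Finset.univ_nonempty (fun a' : A => Q t (x', a'))| ≤
          (Fintype.card X) * (Lp * ‖s - t‖ * M) := by
        calc |∑ x' : X, (p s xa x' - p t xa x') *
            Finset.univ.sup' Finset.univ_nonempty (fun a' : A => Q t (x', a'))|
            ≤ ∑ x' : X, |(p s xa x' - p t xa x') *
            Finset.univ.sup' Finset.univ_nonempty (fun a' : A => Q t (x', a'))| :=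
              Finset.abs_sum_le_sum_abs _ _
        _ ≤ ∑ _x' : X, Lp * ‖s - t‖ * M := by
            apply Finset.sum_le_sum; intro x' _
            rw [abs_mul]
            exact mul_le_mul (hLp s hs t ht xa x')
              ((hm (Q t) x').trans (hQbound t ht)) (abs_nonneg _)
              (mul_nonneg hLp0 (norm_nonneg _))
        _ = (Fintype.card X) * (Lp * ‖s - t‖ * M) := by
            rw [Finset.sum_const, Finset.card_univ, nsmul_eq_mul]
      calc |r s xa - r t xa
          + α * (∑ x' : X, p s xa x' *
              (Finset.univ.sup' Finset.univ_nonempty (fun a' : A => Q s (x', a'))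
               - Finset.univ.sup' Finset.univ_nonempty (fun a' : A => Q t (x', a'))))
          + α * (∑ x' : X, (p s xa x' - p t xa x') *
              Finset.univ.sup' Finset.univ_nonempty (fun a' : A => Q t (x', a')))|
          ≤ |r s xa - r t xa|
          + |α * (∑ x' : X, p s xa x' *
              (Finset.univ.sup' Finset.univ_nonempty (fun a' : A => Q s (x', a'))
               - Finset.univ.sup' Finset.univ_nonempty (fun a' : A => Q t (x', a'))))|
          + |α * (∑ x' : X, (p s xa x' - p t xa x') *
              Finset.univ.sup' Finset.univ_nonempty (fun a' : A => Q t (x', a')))| :=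
            (abs_add_le _ _).trans (by gcongr; exact abs_add_le _ _)
      _ ≤ Lr * ‖s - t‖ + α * D + α * ((Fintype.card X) * (Lp * ‖s - t‖ * M)) := by
          gcongr ?_ + ?_ + ?_ <;>
            [(rw [abs_mul, abs_of_nonneg hα0]; exact mul_le_mul_of_nonneg_left b2 hα0);
             (rw [abs_mul, abs_of_nonneg hα0]; exact mul_le_mul_of_nonneg_left b3 hα0)]
      _ = α * D + (Lr + α * (Fintype.card X) * Lp * M) * ‖s - t‖ := by ring
    rw [le_div_iff₀ h1α]
    linarith
  -- Step C : distance bound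
  have hNpos : (0:ℝ) < (N:ℝ) := by positivity
  have hNne : (N:ℝ) ≠ 0 := ne_of_gt hNpos
  have hdist : ‖st - sstar‖ ≤ C0 / N := by
    have heq : st - sstar = ((1:ℝ) / N) • (s' - sstar) := by
      rw [hstdef]
      have h1 : ((N:ℝ) - 1) / N = 1 - 1 / N := by field_simp
      rw [h1, sub_smul, one_smul, smul_sub]
      abel
    rw [heq, norm_smul, Real.norm_eq_abs,
      abs_of_nonneg (by positivity : (0:ℝ) ≤ 1 / (N:ℝ))]
    rw [div_mul_eq_mul_div, one_mul, div_le_div_iff₀ hNpos hNpos]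
    have := hC0 s' hs' sstar hsstar
    nlinarith [norm_nonneg (s' - sstar)]
  have hC0nn : 0 ≤ C0 := by
    obtain ⟨a, ha⟩ := hS
    have := hC0 a ha a ha
    simpa using this
  -- combine
  have hB : supNorm (fun xa => Q st xa - Q sstar xa) ≤
      C0 * ((1 - α) * Lr + α * Rmax * (Fintype.card X) * Lp) / (1 - α) ^ 2 / N := by
    calc supNorm (fun xa => Q st xa - Q sstar xa)
        ≤ (Lr + α * (Fintype.card X) * Lp * M) * ‖st - sstar‖ / (1 - α) :=
          hLip st hstilde sstar hsstar
    _ ≤ (Lr + α * (Fintype.card X) * Lp * M) * (C0 / N) / (1 - α) := by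
        gcongr
    _ = C0 * ((1 - α) * Lr + α * Rmax * (Fintype.card X) * Lp) / (1 - α) ^ 2 / N := by
        rw [hMdef]; field_simp
  apply Finset.sup'_le
  intro xa _
  have t1 : |Qhat xa - Q st xa| ≤ CDQN / Real.sqrt Ns :=
    le_trans (Finset.le_sup' (fun xa : X × A => |Qhat xa - Q st xa|) (Finset.mem_univ xa)) hDQN
  have t2 : |Q st xa - Q sstar xa| ≤
      C0 * ((1 - α) * Lr + α * Rmax * (Fintype.card X) * Lp) / (1 - α) ^ 2 / N :=
    le_trans (Finset.le_sup' (fun xa : X × A => |Q st xa - Q sstar xa|) (Finset.mem_univ xa)) hB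
  calc |Qhat xa - Q sstar xa| ≤ |Qhat xa - Q st xa| + |Q st xa - Q sstar xa| :=
        abs_sub_le _ _ _
  _ ≤ _ := add_le_add t1 t2
end
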